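/- For any two compactly supported probability measures μ and ν on ℝ^d, the kernel distance with respect to the σ-scaled Gaussian kernel satisfies lim_{σ→∞} D_{K_σ}(μ,ν) = ‖μ̄ − ν̄‖, i.e., the function σ ↦ D_{K_σ}(μ,ν) tends to ‖μ̄ − ν̄‖ as σ → ∞. -/

import Mathlib

open MeasureTheory Filter Real
open scoped RealInnerProductSpace

noncomputable def gaussK {d : ℕ} (σ : ℝ) (p x : EuclideanSpace ℝ (Fin d)) : ℝ :=
  σ ^ 2 * Real.exp (-‖p - x‖ ^ 2 / (2 * σ ^ 2))

noncomputable def kde {d : ℕ} (σ : ℝ) (μ : Measure (EuclideanSpace ℝ (Fin d)))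
    (x : EuclideanSpace ℝ (Fin d)) : ℝ :=
  ∫ p, gaussK σ p x ∂μ

noncomputable def kap {d : ℕ} (σ : ℝ) (μ ν : Measure (EuclideanSpace ℝ (Fin d))) : ℝ :=
  ∫ p, ∫ q, gaussK σ p q ∂ν ∂μ

noncomputable def DK {d : ℕ} (σ : ℝ) (μ ν : Measure (EuclideanSpace ℝ (Fin d))) : ℝ :=
  Real.sqrt (kap σ μ μ + kap σ ν ν - 2 * kap σ μ ν)

/-- kernel distance from a measure to a point -/
noncomputable def dKmu {d : ℕ} (σ : ℝ) (μ : Measure (EuclideanSpace ℝ (Fin d)))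
    (x : EuclideanSpace ℝ (Fin d)) : ℝ :=
  DK σ μ (Measure.dirac x)

/-- kernel distance between two points -/
noncomputable def DKpt {d : ℕ} (σ : ℝ) (p q : EuclideanSpace ℝ (Fin d)) : ℝ :=
  DK σ (Measure.dirac p) (Measure.dirac q)

/-- kernel power distance with respect to a finite nonempty point set `P` -/
noncomputable def Kpow {d : ℕ} (σ : ℝ) (P : Finset (EuclideanSpace ℝ (Fin d)))
    (hP : P.Nonempty) (μ : Measure (EuclideanSpace ℝ (Fin d)))
    (x : EuclideanSpace ℝ (Fin d)) : ℝ :=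
  Real.sqrt (P.inf' hP fun p => DKpt σ p x ^ 2 + dKmu σ μ p ^ 2)

/-- The mean of a measure on `ℝ^d`. -/
noncomputable def meanM {d : ℕ} (μ : Measure (EuclideanSpace ℝ (Fin d))) :
    EuclideanSpace ℝ (Fin d) :=
  ∫ p, p ∂μ

variable {d : ℕ}


lemma gaussK_cont (σ : ℝ) : Continuous fun z : (EuclideanSpace ℝ (Fin d)) × (EuclideanSpace ℝ (Fin d)) => gaussK σ z.1 z.2 := by
  unfold gaussK
  fun_prop

lemma gaussK_le (σ : ℝ) (p q : (EuclideanSpace ℝ (Fin d))) : |gaussK σ p q| ≤ σ ^ 2 := by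
  unfold gaussK
  rw [abs_mul, abs_of_nonneg (sq_nonneg σ), abs_of_pos (Real.exp_pos _)]
  calc σ ^ 2 * Real.exp (-‖p - q‖ ^ 2 / (2 * σ ^ 2)) ≤ σ ^ 2 * 1 := by
        apply mul_le_mul_of_nonneg_left _ (sq_nonneg σ)
        rw [Real.exp_le_one_iff]
        apply div_nonpos_of_nonpos_of_nonneg
        · simp [sq_nonneg]
        · positivity
    _ = σ ^ 2 := mul_one _

lemma gaussK_sub_le {σ : ℝ} (hσ : σ ≠ 0) (p q : (EuclideanSpace ℝ (Fin d))) :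
    |gaussK σ p q - σ ^ 2| ≤ ‖p - q‖ ^ 2 / 2 := by
  unfold gaussK
  set u : ℝ := -‖p - q‖ ^ 2 / (2 * σ ^ 2) with hu
  have hu0 : u ≤ 0 := div_nonpos_of_nonpos_of_nonneg (by simp [sq_nonneg]) (by positivity)
  have h1 : Real.exp u ≤ 1 := Real.exp_le_one_iff.2 hu0
  have h2 : 1 - Real.exp u ≤ -u := by nlinarith [Real.add_one_le_exp u]
  have : σ ^ 2 * Real.exp u - σ ^ 2 = -(σ ^ 2 * (1 - Real.exp u)) := by ring
  rw [this, abs_neg, abs_of_nonneg (by nlinarith [sq_nonneg σ])]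
  have hσ2 : (0:ℝ) < σ ^ 2 := by positivity
  have : σ ^ 2 * -u = ‖p - q‖ ^ 2 / 2 := by
    rw [hu]; field_simp
  nlinarith [mul_le_mul_of_nonneg_left h2 (le_of_lt hσ2)]

lemma gaussK_tendsto (p q : (EuclideanSpace ℝ (Fin d))) :
    Tendsto (fun σ : ℝ => gaussK σ p q - σ ^ 2) atTop (nhds (-‖p - q‖ ^ 2 / 2)) := by
  set c : ℝ := ‖p - q‖ ^ 2 with hc
  have hc0 : 0 ≤ c := by positivity
  rcases eq_or_lt_of_le hc0 with h | h
  · have : ∀ σ : ℝ, gaussK σ p q - σ ^ 2 = 0 := by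
      intro σ; unfold gaussK; rw [← hc, ← h]; simp
    simp only [this, ← h]
    simpa using tendsto_const_nhds
  · -- c > 0
    have hexp : Tendsto (fun u : ℝ => (Real.exp u - 1) / u) (nhdsWithin 0 {0}ᶜ) (nhds 1) := by
      have h0 := hasDerivAt_iff_tendsto_slope.1 (Real.hasDerivAt_exp 0)
      rw [Real.exp_zero] at h0
      apply h0.congr'
      filter_upwards [self_mem_nhdsWithin] with u hu
      simp only [Set.mem_compl_iff, Set.mem_singleton_iff] at hu
      rw [slope_def_field]
      field_simp
      rw [Real.exp_zero, sub_zero]; ring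
    have hg : Tendsto (fun σ : ℝ => -c / (2 * σ ^ 2)) atTop (nhdsWithin 0 {0}ᶜ) := by
      apply tendsto_nhdsWithin_of_tendsto_nhds_of_eventually_within
      · have : Tendsto (fun σ : ℝ => 2 * σ ^ 2) atTop atTop := by
          apply Tendsto.const_mul_atTop (by norm_num)
          exact tendsto_pow_atTop (by norm_num)
        have := (tendsto_inv_atTop_zero).comp this
        have h2 := this.const_mul (-c)
        simpa [Function.comp, div_eq_mul_inv] using h2
      · filter_upwards [eventually_gt_atTop (0:ℝ)] with σ hσ
        simp only [Set.mem_compl_iff, Set.mem_singleton_iff]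
        have : σ ^ 2 ≠ 0 := by positivity
        intro hcon
        rw [div_eq_zero_iff] at hcon
        rcases hcon with h1 | h1
        · linarith
        · simp at h1; exact this (by linarith)
    have key : Tendsto (fun σ : ℝ =>
        (-c / 2) * ((Real.exp (-c / (2 * σ ^ 2)) - 1) / (-c / (2 * σ ^ 2))))
        atTop (nhds (-c / 2)) := by
      have := (hexp.comp hg).const_mul (-c / 2)
      simpa using this
    apply key.congr'
    filter_upwards [eventually_gt_atTop (0:ℝ)] with σ hσ
    unfold gaussK
    rw [← hc]
    have hσ2 : σ ^ 2 ≠ 0 := by positivity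
    have hcne : c ≠ 0 := ne_of_gt h
    field_simp

lemma integrable_of_compact_supp {X : Type*} [MeasurableSpace X] [TopologicalSpace X]
    [OpensMeasurableSpace X] (P : Measure X) [IsProbabilityMeasure P] {s : Set X}
    (hs : P sᶜ = 0) {f : X → ℝ} (hf : Continuous f) {C : ℝ} (hC : ∀ x ∈ s, |f x| ≤ C) :
    Integrable f P := by
  apply Integrable.mono' (integrable_const C) hf.aestronglyMeasurable
  rw [MeasureTheory.ae_iff]
  apply measure_mono_null _ hs
  intro x hx
  simp only [Set.mem_setOf_eq, not_le] at hx
  intro hxs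
  exact absurd (hC x hxs) (by simp [Real.norm_eq_abs] at hx ⊢; linarith)

section Meas
variable {d : ℕ}


variable (μ ν : Measure (EuclideanSpace ℝ (Fin d))) [IsProbabilityMeasure μ] [IsProbabilityMeasure ν]

lemma gaussK_integrable (σ : ℝ) :
    Integrable (fun z : (EuclideanSpace ℝ (Fin d)) × (EuclideanSpace ℝ (Fin d)) => gaussK σ z.1 z.2) (μ.prod ν) := by
  apply Integrable.mono' (integrable_const (σ ^ 2)) (gaussK_cont σ).aestronglyMeasurable
  exact ae_of_all _ fun z => gaussK_le σ z.1 z.2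

lemma kap_prod (σ : ℝ) : kap σ μ ν = ∫ z : (EuclideanSpace ℝ (Fin d)) × (EuclideanSpace ℝ (Fin d)), gaussK σ z.1 z.2 ∂μ.prod ν :=
  (integral_prod _ (gaussK_integrable μ ν σ)).symm

lemma prod_supp_null {s t : Set (EuclideanSpace ℝ (Fin d))} (hs : μ sᶜ = 0) (ht : ν tᶜ = 0) :
    μ.prod ν (s ×ˢ t)ᶜ = 0 := by
  have : (s ×ˢ t)ᶜ ⊆ (sᶜ ×ˢ (Set.univ : Set (EuclideanSpace ℝ (Fin d)))) ∪ ((Set.univ : Set (EuclideanSpace ℝ (Fin d))) ×ˢ tᶜ) := by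
    intro z hz
    simp only [Set.mem_compl_iff, Set.mem_prod, not_and_or] at hz
    rcases hz with h | h
    · left; exact ⟨h, trivial⟩
    · right; exact ⟨trivial, h⟩
  apply measure_mono_null this
  apply le_antisymm _ zero_le
  calc μ.prod ν ((sᶜ ×ˢ (Set.univ : Set (EuclideanSpace ℝ (Fin d)))) ∪ ((Set.univ : Set (EuclideanSpace ℝ (Fin d))) ×ˢ tᶜ))
      ≤ μ.prod ν (sᶜ ×ˢ (Set.univ : Set (EuclideanSpace ℝ (Fin d)))) + μ.prod ν ((Set.univ : Set (EuclideanSpace ℝ (Fin d))) ×ˢ tᶜ) :=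
        measure_union_le _ _
    _ = 0 := by rw [Measure.prod_prod, Measure.prod_prod, hs, ht]; simp

lemma key_tendsto (hμc : ∃ s : Set (EuclideanSpace ℝ (Fin d)), IsCompact s ∧ μ sᶜ = 0)
    (hνc : ∃ s : Set (EuclideanSpace ℝ (Fin d)), IsCompact s ∧ ν sᶜ = 0) :
    Tendsto (fun σ : ℝ => kap σ μ ν - σ ^ 2) atTop
      (nhds (∫ z : (EuclideanSpace ℝ (Fin d)) × (EuclideanSpace ℝ (Fin d)), -‖z.1 - z.2‖ ^ 2 / 2 ∂μ.prod ν)) := by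
  obtain ⟨s, hs, hsn⟩ := hμc
  obtain ⟨t, ht, htn⟩ := hνc
  obtain ⟨R, hR⟩ := hs.isBounded.exists_norm_le
  obtain ⟨S, hS⟩ := ht.isBounded.exists_norm_le
  have hbd : Integrable (fun z : (EuclideanSpace ℝ (Fin d)) × (EuclideanSpace ℝ (Fin d)) => ‖z.1 - z.2‖ ^ 2 / 2) (μ.prod ν) := by
    apply integrable_of_compact_supp (μ.prod ν) (prod_supp_null μ ν hsn htn)
      (by fun_prop) (C := (R + S) ^ 2 / 2)
    rintro ⟨p, q⟩ ⟨hp, hq⟩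
    have h1 : ‖p - q‖ ≤ R + S := (norm_sub_le p q).trans (add_le_add (hR p hp) (hS q hq))
    have h0 : (0:ℝ) ≤ ‖p - q‖ := norm_nonneg _
    rw [abs_of_nonneg (by positivity)]
    nlinarith
  have hmain : Tendsto (fun σ : ℝ => ∫ z : (EuclideanSpace ℝ (Fin d)) × (EuclideanSpace ℝ (Fin d)), (gaussK σ z.1 z.2 - σ ^ 2) ∂μ.prod ν)
      atTop (nhds (∫ z : (EuclideanSpace ℝ (Fin d)) × (EuclideanSpace ℝ (Fin d)), -‖z.1 - z.2‖ ^ 2 / 2 ∂μ.prod ν)) := by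
    apply tendsto_integral_filter_of_dominated_convergence
      (fun z : (EuclideanSpace ℝ (Fin d)) × (EuclideanSpace ℝ (Fin d)) => ‖z.1 - z.2‖ ^ 2 / 2)
    · filter_upwards with σ
      exact ((gaussK_cont σ).sub continuous_const).aestronglyMeasurable
    · filter_upwards [eventually_ge_atTop (1:ℝ)] with σ hσ
      exact ae_of_all _ fun z => gaussK_sub_le (by linarith) z.1 z.2
    · exact hbd
    · exact ae_of_all _ fun z => gaussK_tendsto z.1 z.2
  apply hmain.congr
  intro σ
  rw [kap_prod, integral_sub (gaussK_integrable μ ν σ) (integrable_const _), integral_const]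
  simp

lemma norm_sq_integrable {s : Set (EuclideanSpace ℝ (Fin d))} (hs : IsCompact s) (hsn : μ sᶜ = 0) :
    Integrable (fun p : EuclideanSpace ℝ (Fin d) => ‖p‖ ^ 2) μ := by
  obtain ⟨R, hR⟩ := hs.isBounded.exists_norm_le
  apply integrable_of_compact_supp μ hsn (by fun_prop) (C := R ^ 2)
  intro x hx
  have := hR x hx
  have h0 : (0:ℝ) ≤ ‖x‖ := norm_nonneg _
  rw [abs_of_nonneg (by positivity)]
  nlinarith

lemma id_integrable {s : Set (EuclideanSpace ℝ (Fin d))} (hs : IsCompact s) (hsn : μ sᶜ = 0) :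
    Integrable (fun p : EuclideanSpace ℝ (Fin d) => p) μ := by
  obtain ⟨R, hR⟩ := hs.isBounded.exists_norm_le
  apply Integrable.mono' (integrable_const R) continuous_id.aestronglyMeasurable
  rw [MeasureTheory.ae_iff]
  apply measure_mono_null _ hsn
  intro x hx
  simp only [Set.mem_setOf_eq, not_le] at hx
  exact fun hxs => absurd (hR x hxs) (not_le.2 hx)

end Meas

section Vals
variable {d : ℕ} (μ ν : Measure (EuclideanSpace ℝ (Fin d)))
  [IsProbabilityMeasure μ] [IsProbabilityMeasure ν]

lemma L_val (hμc : ∃ s : Set (EuclideanSpace ℝ (Fin d)), IsCompact s ∧ μ sᶜ = 0)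
    (hνc : ∃ s : Set (EuclideanSpace ℝ (Fin d)), IsCompact s ∧ ν sᶜ = 0) :
    ∫ z : (EuclideanSpace ℝ (Fin d)) × (EuclideanSpace ℝ (Fin d)),
        -‖z.1 - z.2‖ ^ 2 / 2 ∂μ.prod ν =
      -(∫ p, ‖p‖ ^ 2 ∂μ) / 2 - (∫ q, ‖q‖ ^ 2 ∂ν) / 2 + ⟪meanM μ, meanM ν⟫ := by
  obtain ⟨s, hs, hsn⟩ := hμc
  obtain ⟨t, ht, htn⟩ := hνc
  obtain ⟨R, hR⟩ := hs.isBounded.exists_norm_le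
  obtain ⟨S, hS⟩ := ht.isBounded.exists_norm_le
  have hnull := prod_supp_null μ ν hsn htn
  have I1 : Integrable (fun z : (EuclideanSpace ℝ (Fin d)) × (EuclideanSpace ℝ (Fin d)) =>
      ‖z.1‖ ^ 2) (μ.prod ν) := by
    apply integrable_of_compact_supp (μ.prod ν) hnull (by fun_prop) (C := R ^ 2)
    rintro ⟨p, q⟩ ⟨hp, _⟩
    have := hR p hp
    have h0 : (0:ℝ) ≤ ‖p‖ := norm_nonneg _
    rw [abs_of_nonneg (by positivity)]; nlinarith
  have I2 : Integrable (fun z : (EuclideanSpace ℝ (Fin d)) × (EuclideanSpace ℝ (Fin d)) =>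
      ‖z.2‖ ^ 2) (μ.prod ν) := by
    apply integrable_of_compact_supp (μ.prod ν) hnull (by fun_prop) (C := S ^ 2)
    rintro ⟨p, q⟩ ⟨_, hq⟩
    have := hS q hq
    have h0 : (0:ℝ) ≤ ‖q‖ := norm_nonneg _
    rw [abs_of_nonneg (by positivity)]; nlinarith
  have I3 : Integrable (fun z : (EuclideanSpace ℝ (Fin d)) × (EuclideanSpace ℝ (Fin d)) =>
      ⟪z.1, z.2⟫) (μ.prod ν) := by
    apply integrable_of_compact_supp (μ.prod ν) hnull continuous_inner (C := |R| * |S|)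
    rintro ⟨p, q⟩ ⟨hp, hq⟩
    calc |⟪p, q⟫| ≤ ‖p‖ * ‖q‖ := abs_real_inner_le_norm p q
      _ ≤ |R| * |S| := by
          apply mul_le_mul ((hR p hp).trans (le_abs_self R))
            ((hS q hq).trans (le_abs_self S)) (norm_nonneg _) (abs_nonneg _)
  have hpt : ∀ z : (EuclideanSpace ℝ (Fin d)) × (EuclideanSpace ℝ (Fin d)),
      -‖z.1 - z.2‖ ^ 2 / 2 = -(‖z.1‖ ^ 2) / 2 + ⟪z.1, z.2⟫ - ‖z.2‖ ^ 2 / 2 := by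
    intro z
    have := norm_sub_sq_real z.1 z.2
    linarith
  rw [integral_congr_ae (ae_of_all _ hpt)]
  have Ib : Integrable (fun z : (EuclideanSpace ℝ (Fin d)) × (EuclideanSpace ℝ (Fin d)) =>
      -‖z.1‖ ^ 2 / 2) (μ.prod ν) := (I1.neg).div_const 2
  have Ia : Integrable (fun z : (EuclideanSpace ℝ (Fin d)) × (EuclideanSpace ℝ (Fin d)) =>
      -‖z.1‖ ^ 2 / 2 + ⟪z.1, z.2⟫) (μ.prod ν) := Ib.add I3
  rw [integral_sub Ia (I2.div_const 2), integral_add Ib I3, integral_div, integral_neg,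
    integral_div]
  have e1 : ∫ z : (EuclideanSpace ℝ (Fin d)) × (EuclideanSpace ℝ (Fin d)),
      ‖z.1‖ ^ 2 ∂μ.prod ν = ∫ p, ‖p‖ ^ 2 ∂μ := by
    rw [integral_prod _ I1]
    simp [integral_const]
  have e2 : ∫ z : (EuclideanSpace ℝ (Fin d)) × (EuclideanSpace ℝ (Fin d)),
      ‖z.2‖ ^ 2 ∂μ.prod ν = ∫ q, ‖q‖ ^ 2 ∂ν := by
    rw [integral_prod _ I2]
    simp [integral_const]
  have e3 : ∫ z : (EuclideanSpace ℝ (Fin d)) × (EuclideanSpace ℝ (Fin d)),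
      ⟪z.1, z.2⟫ ∂μ.prod ν = ⟪meanM μ, meanM ν⟫ := by
    rw [integral_prod _ I3]
    have hidν : Integrable (fun q : EuclideanSpace ℝ (Fin d) => q) ν := id_integrable ν ht htn
    have hinner : ∀ p : EuclideanSpace ℝ (Fin d),
        ∫ q, ⟪p, q⟫ ∂ν = ⟪p, meanM ν⟫ := fun p => integral_inner hidν p
    simp_rw [hinner]
    have : ∀ p : EuclideanSpace ℝ (Fin d), ⟪p, meanM ν⟫ = ⟪meanM ν, p⟫ := fun p =>
      real_inner_comm _ _
    simp_rw [this]
    rw [integral_inner (𝕜 := ℝ) (id_integrable μ hs hsn) (meanM ν)]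
    simp only [meanM]
  rw [e1, e2, e3]
  ring

end Vals

/-- For compactly supported probability measures, the kernel distance with respect to the
`σ`-scaled Gaussian kernel tends to `‖μ̄ − ν̄‖` as `σ → ∞`. -/
theorem kernel_distance_tendsto_mean_distance {d : ℕ} (hd : 1 ≤ d)
    (μ ν : Measure (EuclideanSpace ℝ (Fin d)))
    [IsProbabilityMeasure μ] [IsProbabilityMeasure ν]
    (hμc : ∃ s : Set (EuclideanSpace ℝ (Fin d)), IsCompact s ∧ μ sᶜ = 0)
    (hνc : ∃ s : Set (EuclideanSpace ℝ (Fin d)), IsCompact s ∧ ν sᶜ = 0) :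
    Filter.Tendsto (fun σ : ℝ => DK σ μ ν) Filter.atTop
      (nhds ‖meanM μ - meanM ν‖) := by
  have h1 := key_tendsto μ μ hμc hμc
  have h2 := key_tendsto ν ν hνc hνc
  have h3 := key_tendsto μ ν hμc hνc
  rw [L_val μ μ hμc hμc] at h1
  rw [L_val ν ν hνc hνc] at h2
  rw [L_val μ ν hμc hνc] at h3
  set A := ∫ p, ‖p‖ ^ 2 ∂μ with hA
  set B := ∫ q, ‖q‖ ^ 2 ∂ν with hB
  set m := meanM μ with hm
  set n := meanM ν with hn
  have hT : Tendsto (fun σ : ℝ => kap σ μ μ + kap σ ν ν - 2 * kap σ μ ν) atTop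
      (nhds (‖m - n‖ ^ 2)) := by
    have hsum := ((h1.add h2).sub (h3.const_mul 2))
    have heq : (-A / 2 - A / 2 + ⟪m, m⟫ + (-B / 2 - B / 2 + ⟪n, n⟫)) -
        2 * (-A / 2 - B / 2 + ⟪m, n⟫) = ‖m - n‖ ^ 2 := by
      have := norm_sub_sq_real m n
      have hm2 : ⟪m, m⟫ = ‖m‖ ^ 2 := real_inner_self_eq_norm_sq m
      have hn2 : ⟪n, n⟫ = ‖n‖ ^ 2 := real_inner_self_eq_norm_sq n
      linarith
    rw [heq] at hsum
    apply hsum.congr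
    intro σ
    ring
  have hsqrt := (Real.continuous_sqrt.continuousAt (x := ‖m - n‖ ^ 2)).tendsto.comp hT
  rw [Real.sqrt_sq (norm_nonneg _)] at hsqrt
  exact hsqrt
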